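/- Let A be an expanding 2×2 matrix with characteristic polynomial x² + x − 3, v with {v, Av} linearly independent, and define α_i, β_i by A^{−i}v = α_i v + β_i Av. Then ∑_{i=1}^{∞} |α_i| = 2 and ∑_{i=1}^{∞} |β_i| = 1. -/

import Mathlib

open Matrix Polynomial

/-- All (complex) eigenvalues of `A` have modulus strictly larger than `1`. -/
def IsExpandingMat (A : Matrix (Fin 2) (Fin 2) ℝ) : Prop :=
  ∀ μ ∈ spectrum ℂ (A.map (algebraMap ℝ ℂ)), 1 < ‖μ‖

set_option maxHeartbeats 1600000 in
theorem stmt11 (A : Matrix (Fin 2) (Fin 2) ℝ) (hexp : IsExpandingMat A)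
    (hchar : A.charpoly = X ^ 2 + C (1 : ℝ) * X - C 3)
    (v : Fin 2 → ℝ) (hv : LinearIndependent ℝ ![v, A *ᵥ v])
    (α β : ℕ → ℝ)
    (hαβ : ∀ i, 1 ≤ i → A⁻¹ ^ i *ᵥ v = α i • v + β i • (A *ᵥ v)) :
    HasSum (fun i : ℕ => |α (i + 1)|) 2 ∧ HasSum (fun i : ℕ => |β (i + 1)|) 1 := by
  -- Cayley–Hamilton
  have h := A.aeval_self_charpoly
  rw [hchar] at h
  simp only [map_sub, map_add, _root_.map_mul, aeval_X, aeval_C, sq, map_pow,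
    Algebra.algebraMap_eq_smul_one, one_smul, one_mul] at h
  rw [sub_eq_zero] at h
  -- inverse
  have hmul : A * ((3:ℝ)⁻¹ • (A + 1)) = 1 := by
    rw [Matrix.mul_smul, Matrix.mul_add, Matrix.mul_one, h, smul_smul]; norm_num
  have hAinv : A⁻¹ = (3:ℝ)⁻¹ • (A + 1) := inv_eq_right_inv hmul
  have hunitdet : IsUnit A.det := by
    apply IsUnit.of_mul_eq_one ((3:ℝ)⁻¹ • (A + 1)).det
    rw [← det_mul, hmul, det_one]
  have hinvmul : A⁻¹ * A = 1 := nonsing_inv_mul A hunitdet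
  -- uniqueness of coefficients
  have huniq : ∀ a b a' b' : ℝ, a • v + b • (A *ᵥ v) = a' • v + b' • (A *ᵥ v) →
      a = a' ∧ b = b' := by
    intro a b a' b' hab
    rw [Fintype.linearIndependent_iff] at hv
    have h0 := hv ![a - a', b - b'] ?_
    · constructor
      · have := h0 0; simpa [sub_eq_zero] using this
      · have := h0 1; simpa [sub_eq_zero] using this
    · simp only [Fin.sum_univ_two, Matrix.cons_val_zero, Matrix.cons_val_one, Matrix.head_cons]
      rw [sub_smul, sub_smul]
      rw [← sub_eq_zero] at hab ⊢
      abel_nf at hab ⊢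
      convert hab using 2
  -- A⁻¹ action on v
  have hinv_v : A⁻¹ *ᵥ v = (3:ℝ)⁻¹ • v + (3:ℝ)⁻¹ • (A *ᵥ v) := by
    rw [hAinv, smul_mulVec, add_mulVec, one_mulVec, smul_add]
    ring_nf
  have hinv_Av : A⁻¹ *ᵥ (A *ᵥ v) = v := by
    rw [mulVec_mulVec, hinvmul, one_mulVec]
  -- base case
  have hbase : α 1 = 1/3 ∧ β 1 = 1/3 := by
    have h1 := hαβ 1 le_rfl
    rw [pow_one] at h1
    have := huniq ((3:ℝ)⁻¹) ((3:ℝ)⁻¹) (α 1) (β 1) (by rw [← h1, hinv_v])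
    refine ⟨?_, ?_⟩
    · rw [← this.1]; norm_num
    · rw [← this.2]; norm_num
  -- recurrence
  have hrec : ∀ i, 1 ≤ i → α (i+1) = α i / 3 + β i ∧ β (i+1) = α i / 3 := by
    intro i hi
    have h1 := hαβ i hi
    have h2 := hαβ (i+1) (le_trans hi (Nat.le_succ i))
    rw [pow_succ', ← mulVec_mulVec, h1, mulVec_add, mulVec_smul, mulVec_smul,
      hinv_v, hinv_Av] at h2
    have heq : (α i / 3 + β i) • v + (α i / 3) • (A *ᵥ v)
        = α (i+1) • v + β (i+1) • (A *ᵥ v) := by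
      rw [← h2]
      module
    have := huniq _ _ _ _ heq
    exact ⟨(this.1).symm, (this.2).symm⟩
  have hpos : ∀ i, 1 ≤ i → 0 < α i ∧ 0 < β i := by
    intro i hi
    induction i, hi using Nat.le_induction with
    | base => rw [hbase.1, hbase.2]; norm_num
    | succ i hi ih =>
      obtain ⟨h1, h2⟩ := hrec i hi
      exact ⟨by rw [h1]; linarith [ih.1, ih.2], by rw [h2]; linarith [ih.1]⟩
  set c := Real.sqrt 13 with hcdef
  have hc0 : 0 ≤ c := Real.sqrt_nonneg 13
  have hc2 : c ^ 2 = 13 := Real.sq_sqrt (by norm_num)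
  have hc3 : 3 < c := by nlinarith
  have hc4 : c < 4 := by nlinarith
  set r : ℝ := (1 + c) / 6 with hrdef
  set s : ℝ := (1 - c) / 6 with hsdef
  have e1 : r + s = 1/3 := by rw [hrdef, hsdef]; ring
  have e2 : r * s = -1/3 := by rw [hrdef, hsdef]; field_simp; linear_combination -3*hc2
  have hr3 : 3 * r ^ 2 = r + 1 := by rw [hrdef]; field_simp; linear_combination 3*hc2
  have hs3 : 3 * s ^ 2 = s + 1 := by rw [hsdef]; field_simp; linear_combination 3*hc2
  have hrs0 : r - s ≠ 0 := by rw [hrdef, hsdef]; intro h; nlinarith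
  have hr1 : r < 1 := by rw [hrdef]; nlinarith
  have hs1 : 1 - s ≠ 0 := by rw [hsdef]; intro h; nlinarith
  have key : ∀ i, 1 ≤ i →
      (r - s) * α i = r ^ (i+1) - s ^ (i+1) ∧ 3 * (r - s) * β i = r ^ i - s ^ i := by
    intro i hi
    induction i, hi using Nat.le_induction with
    | base =>
      rw [hbase.1, hbase.2]
      constructor
      · linear_combination (s - r) * e1
      · ring
    | succ i hi ih =>
      constructor
      · linear_combination (r - s) * (hrec i hi).1 + (1/3) * ih.1 + (1/3) * ih.2
          + (r^i/3) * hr3 - (s^i/3) * hs3 + ((s^i - r^i)/18) * hc2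
      · linear_combination 3 * (r - s) * (hrec i hi).2 + ih.1
  have hrn : ‖r‖ < 1 := by
    rw [Real.norm_eq_abs, abs_lt]; constructor
    · rw [hrdef]; nlinarith
    · exact hr1
  have hsn : ‖s‖ < 1 := by
    rw [Real.norm_eq_abs, abs_lt]; constructor <;> [rw [hsdef]; rw [hsdef]] <;> nlinarith
  have G1 := hasSum_geometric_of_norm_lt_one hrn
  have G2 := hasSum_geometric_of_norm_lt_one hsn
  have h1r : (1:ℝ) - r ≠ 0 := by intro h; nlinarith
  constructor
  · have Hα := (G1.mul_left (r^2/(r-s))).sub (G2.mul_left (s^2/(r-s)))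
    have hfun : ∀ i : ℕ, |α (i+1)| = r^2/(r-s) * r^i - s^2/(r-s) * s^i := by
      intro i
      rw [abs_of_pos (hpos (i+1) (by omega)).1]
      have hk := (key (i+1) (by omega)).1
      rw [div_mul_eq_mul_div, div_mul_eq_mul_div, div_sub_div_same, eq_comm, div_eq_iff hrs0]
      linear_combination -hk
    have hval : r^2/(r-s) * (1-r)⁻¹ - s^2/(r-s) * (1-s)⁻¹ = 2 := by
      field_simp
      linear_combination (2*r - 2*s - r^2 + s^2) * e1 + (r - s) * e2 + (c/27) * hc2
    simp only [hfun]
    exact hval ▸ Hα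
  · have Hβ := (G1.mul_left (r/(3*(r-s)))).sub (G2.mul_left (s/(3*(r-s))))
    have hfun : ∀ i : ℕ, |β (i+1)| = r/(3*(r-s)) * r^i - s/(3*(r-s)) * s^i := by
      intro i
      rw [abs_of_pos (hpos (i+1) (by omega)).2]
      have hk := (key (i+1) (by omega)).2
      have h3 : (3:ℝ)*(r-s) ≠ 0 := mul_ne_zero three_ne_zero hrs0
      have hrw : r/(3*(r-s)) * r^i - s/(3*(r-s)) * s^i
          = (r^(i+1) - s^(i+1))/(3*(r-s)) := by ring
      rw [hrw, eq_div_iff h3]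
      linear_combination hk
    have hval : r/(3*(r-s)) * (1-r)⁻¹ - s/(3*(r-s)) * (1-s)⁻¹ = 1 := by
      field_simp
      linear_combination (3 - 3*r - 3*s) * e1 + 3 * e2 + ((3+c)/36) * hc2
    simp only [hfun]
    exact hval ▸ Hβ
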